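/- Let Γ be a group such that for all natural numbers a and d there exists a maximal subgroup N of Γ of finite index whose normal core K in Γ satisfies |N : K| > a, and which admits a surjective group homomorphism onto the free group F_d of rank d. Then Γ has the finite automorphism realisation property: for every finite group A there exists a subgroup M of Γ of finite index such that N_Γ(M)/M is isomorphic to A. -/

import Mathlib

/-- Proposition on the FARP. If for all `a d : ℕ` the group `Γ` has a
maximal subgroup `N` of finite index with `|N : K| > a` (where `K` is the normal core of
`N` in `Γ`) admitting an epimorphism onto the free group of rank `d`, then every finite
group `A` is isomorphic to `N_Γ(M)/M` for some finite-index subgroup `M ≤ Γ`. -/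
theorem farp_of_maximal_subgroups
    {Γ : Type*} [Group Γ]
    (h : ∀ a d : ℕ, ∃ N : Subgroup Γ, IsCoatom N ∧ N.index ≠ 0 ∧
      a < N.normalCore.relIndex N ∧ ∃ f : N →* FreeGroup (Fin d), Function.Surjective f) :
    ∀ (A : Type*) [Group A] [Finite A], ∃ M : Subgroup Γ, M.index ≠ 0 ∧
      Nonempty ((Subgroup.normalizer (M : Set Γ) ⧸ M.subgroupOf (Subgroup.normalizer (M : Set Γ))) ≃* A) := by
  intro A _ _
  obtain ⟨d, ⟨e⟩⟩ := Finite.exists_equiv_fin A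
  -- surjection from the free group of rank d onto A
  set π : FreeGroup (Fin d) →* A := FreeGroup.lift e.symm with hπ
  have hπs : Function.Surjective π := by
    intro a
    exact ⟨FreeGroup.of (e a), by simp [hπ]⟩
  obtain ⟨N, hN, hNidx, hrel, f, hf⟩ := h (Nat.card A) d
  set φ : N →* A := π.comp f with hφdef
  have hφ : Function.Surjective φ := hπs.comp hf
  set M : Subgroup Γ := φ.ker.map N.subtype with hM
  have hMN : M ≤ N := Subgroup.map_subtype_le _
  have hsub : M.subgroupOf N = φ.ker := by
    rw [hM, Subgroup.subgroupOf, Subgroup.comap_map_eq_self_of_injective N.subtype_injective]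
  have hcardA : Nat.card A ≠ 0 := Nat.card_pos.ne'
  have hker : φ.ker.index = Nat.card A := by
    rw [Subgroup.index, Nat.card_congr
      (QuotientGroup.quotientKerEquivOfSurjective φ hφ).toEquiv]
  have hMrel : M.relIndex N = Nat.card A := by
    rw [Subgroup.relIndex, hsub, hker]
  have hMidx : M.index ≠ 0 := by
    rw [← Subgroup.relIndex_mul_index hMN, hMrel]
    exact mul_ne_zero hcardA hNidx
  -- N normalizes M
  have hmem : ∀ g : Γ, g ∈ M ↔ ∃ hg : g ∈ N, φ ⟨g, hg⟩ = 1 := by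
    intro g
    constructor
    · rintro hgM
      obtain ⟨x, hx, rfl⟩ := hgM
      exact ⟨x.2, by simpa using hx⟩
    · rintro ⟨hg, h1⟩
      exact ⟨⟨g, hg⟩, h1, rfl⟩
  have hle : N ≤ Subgroup.normalizer (M : Set Γ) := by
    intro n hn
    rw [Subgroup.mem_normalizer_iff]
    intro g
    constructor
    · intro hgM
      obtain ⟨hg, h1⟩ := (hmem g).mp hgM
      refine (hmem _).mpr ⟨N.mul_mem (N.mul_mem hn hg) (N.inv_mem hn), ?_⟩
      have : (⟨n * g * n⁻¹, _⟩ : N) = ⟨n, hn⟩ * ⟨g, hg⟩ * (⟨n, hn⟩)⁻¹ := rfl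
      rw [this, map_mul, map_mul, map_inv, h1, mul_one, mul_inv_cancel]
    · intro hgM
      obtain ⟨hg, h1⟩ := (hmem _).mp hgM
      have hgN : g ∈ N := by
        have := N.mul_mem (N.mul_mem (N.inv_mem hn) hg) hn
        simpa [mul_assoc] using this
      refine (hmem g).mpr ⟨hgN, ?_⟩
      have key : (⟨n * g * n⁻¹, hg⟩ : N) = ⟨n, hn⟩ * ⟨g, hgN⟩ * (⟨n, hn⟩)⁻¹ := rfl
      rw [key, map_mul, map_mul, map_inv] at h1
      have := congrArg (fun x => (φ ⟨n, hn⟩)⁻¹ * x * φ ⟨n, hn⟩) h1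
      simpa [mul_assoc] using this
  rcases hle.lt_or_eq with hlt | heq
  · -- normalizer = ⊤, so M is normal, contradiction with relindex bound
    exfalso
    have htop : Subgroup.normalizer (M : Set Γ) = ⊤ := hN.2 _ hlt
    have hnormal : M.Normal := Subgroup.normalizer_eq_top_iff.mp htop
    have hMcore : M ≤ N.normalCore := Subgroup.normal_le_normalCore.mpr hMN
    have := Subgroup.relIndex_le_of_le_left hMcore (L := N) (by rw [hMrel]; exact hcardA)
    omega
  · refine ⟨M, hMidx, ?_⟩
    set ψ : Subgroup.normalizer (M : Set Γ) →* A :=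
      φ.comp (MulEquiv.subgroupCongr heq).symm.toMonoidHom with hψdef
    have hψ : Function.Surjective ψ :=
      hφ.comp (MulEquiv.subgroupCongr heq).symm.surjective
    have hkψ : ψ.ker = M.subgroupOf (Subgroup.normalizer (M : Set Γ)) := by
      ext x
      rw [MonoidHom.mem_ker, Subgroup.mem_subgroupOf, hmem]
      show φ ((MulEquiv.subgroupCongr heq).symm x) = 1 ↔ _
      constructor
      · intro h1
        exact ⟨((MulEquiv.subgroupCongr heq).symm x).2, by convert h1 using 2; exact Subtype.ext rfl⟩
      · rintro ⟨hg, h1⟩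
        convert h1 using 2
        exact Subtype.ext rfl
    exact ⟨(QuotientGroup.quotientMulEquivOfEq hkψ.symm).trans
      (QuotientGroup.quotientKerEquivOfSurjective ψ hψ)⟩
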